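/- Assume additionally that f is L-Lipschitz in y with L > 0 and that diam(Y) > 0. Let α ≥ 0 and let k be a positive integer with k ≥ (n_ξ+1) − (n_ξ+1)(e^{α/(L·diam(Y))} − 1)/e^{α/(L·diam(Y))} (equivalently, k ≥ (n_ξ+1)·e^{−α/(L·diam(Y))}). Then opt(k) ≤ opt(2RO) + α. -/

import Mathlib

open Finset

/-! ### Auxiliary lemmas -/

/-- Top-k mass lemma: from a finset with nonnegative weights one can pick `k` elements
carrying at least a `k / card` fraction of the total weight. -/
lemma topk_mass {β : Type*} [DecidableEq β] (d : ℕ) :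
    ∀ (T : Finset β) (w : β → ℝ), (∀ y ∈ T, 0 ≤ w y) → ∀ k : ℕ, 1 ≤ k → T.card = k + d →
    ∃ S : Finset β, S ⊆ T ∧ S.card = k ∧
      (k : ℝ) * ∑ y ∈ T, w y ≤ (T.card : ℝ) * ∑ y ∈ S, w y := by
  induction d with
  | zero =>
    intro T w hw k hk hcard
    exact ⟨T, Finset.Subset.refl T, by omega, by rw [hcard]; ring_nf; exact le_rfl⟩
  | succ d ih =>
    intro T w hw k hk hcard
    have hTne : T.Nonempty := Finset.card_pos.mp (by omega)
    obtain ⟨y₀, hy₀T, hy₀min⟩ := Finset.exists_min_image T w hTne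
    set T' := T.erase y₀ with hT'
    have hcard' : T'.card = k + d := by
      rw [hT', Finset.card_erase_of_mem hy₀T]; omega
    obtain ⟨S, hST', hScard, hSsum⟩ :=
      ih T' w (fun y hy => hw y (Finset.mem_of_mem_erase hy)) k hk hcard'
    refine ⟨S, hST'.trans (Finset.erase_subset _ _), hScard, ?_⟩
    have hWsplit : ∑ y ∈ T', w y = ∑ y ∈ T, w y - w y₀ :=
      Finset.sum_erase_eq_sub hy₀T
    have hmin : (T.card : ℝ) * w y₀ ≤ ∑ y ∈ T, w y := by
      have := Finset.card_nsmul_le_sum T w (w y₀) hy₀min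
      simpa [nsmul_eq_mul] using this
    have hS0 : 0 ≤ ∑ y ∈ S, w y :=
      Finset.sum_nonneg fun y hy => hw y (Finset.mem_of_mem_erase (hST' hy))
    have hw0 : 0 ≤ w y₀ := hw y₀ hy₀T
    have hc : (T.card : ℝ) = (k : ℝ) + (d : ℝ) + 1 := by rw [hcard]; push_cast; ring
    have hc' : (T'.card : ℝ) = (k : ℝ) + (d : ℝ) := by rw [hcard']; push_cast; ring
    rw [hc', hWsplit] at hSsum
    have hk1 : (1:ℝ) ≤ (k:ℝ) := by exact_mod_cast hk
    have hd0 : (0:ℝ) ≤ (d:ℝ) := Nat.cast_nonneg d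
    rw [hc]
    nlinarith [hSsum, hmin, hS0, hw0, hk1, hd0]

/-- Enumerate a nonempty finset of cardinality at most `k` by a `k`-tuple. -/
lemma exists_tuple_range {β : Type*} (S : Finset β) (k : ℕ) (hne : S.Nonempty)
    (hcard : S.card ≤ k) : ∃ y : Fin k → β, Set.range y = ↑S := by
  classical
  have hm : 0 < S.card := Finset.card_pos.mpr hne
  let e := S.equivFin
  refine ⟨fun i => (e.symm ⟨min i.1 (S.card - 1), by omega⟩ : β), ?_⟩
  ext a
  constructor
  · rintro ⟨i, rfl⟩
    exact (e.symm _).2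
  · intro ha
    have hk0 : 0 < k := lt_of_lt_of_le hm hcard
    have hj : (e ⟨a, ha⟩).1 < S.card := (e ⟨a, ha⟩).2
    refine ⟨⟨(e ⟨a, ha⟩).1, by omega⟩, ?_⟩
    have hmin : min (e ⟨a, ha⟩).1 (S.card - 1) = (e ⟨a, ha⟩).1 := by omega
    simp only [hmin]
    have : (⟨(e ⟨a, ha⟩).1, hj⟩ : Fin S.card) = e ⟨a, ha⟩ := by ext; rfl
    rw [this, Equiv.symm_apply_apply]

/-- Separation step: if every point of a convex set `U` has some index `i` with `G i ξ ≤ v`,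
and each `G i` is concave on `U`, then some convex combination of the `G i` is `≤ v` on `U`. -/
lemma exists_simplex_weights {Eξ : Type*} [AddCommGroup Eξ] [Module ℝ Eξ]
    {ι : Type*} [Fintype ι] [Nonempty ι] {U : Set Eξ} (hUconv : Convex ℝ U)
    (hUne : U.Nonempty) (G : ι → Eξ → ℝ) (hconc : ∀ i, ConcaveOn ℝ U (G i)) (v : ℝ)
    (h : ∀ ξ ∈ U, ∃ i, G i ξ ≤ v) :
    ∃ w : ι → ℝ, (∀ i, 0 ≤ w i) ∧ (∑ i, w i = 1) ∧
      ∀ ξ ∈ U, ∑ i, w i * G i ξ ≤ v := by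
  classical
  obtain ⟨ξ₀, hξ₀⟩ := hUne
  set C : Set (ι → ℝ) := {c | ∃ ξ ∈ U, ∀ i, c i ≤ G i ξ} with hCdef
  set O : Set (ι → ℝ) := Set.univ.pi (fun _ : ι => Set.Ioi v) with hOdef
  have hOconv : Convex ℝ O := convex_pi fun i _ => convex_Ioi v
  have hOopen : IsOpen O := isOpen_set_pi Set.finite_univ fun i _ => isOpen_Ioi
  have hCconv : Convex ℝ C := by
    rintro c ⟨ξ, hξ, hc⟩ c' ⟨ξ', hξ', hc'⟩ a b ha hb hab
    refine ⟨a • ξ + b • ξ', hUconv hξ hξ' ha hb hab, fun i => ?_⟩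
    have hcc := (hconc i).2 hξ hξ' ha hb hab
    simp only [smul_eq_mul] at hcc ⊢
    have h1 := mul_le_mul_of_nonneg_left (hc i) ha
    have h2 := mul_le_mul_of_nonneg_left (hc' i) hb
    simp only [Pi.add_apply, Pi.smul_apply, smul_eq_mul]
    linarith
  have hdisj : Disjoint O C := by
    rw [Set.disjoint_left]
    rintro c hcO ⟨ξ, hξ, hc⟩
    obtain ⟨i, hi⟩ := h ξ hξ
    have hv : v < c i := hcO i (Set.mem_univ i)
    linarith [hc i]
  obtain ⟨φ, u, hO, hC⟩ := geometric_hahn_banach_open hOconv hOopen hCconv hdisj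
  set q : ι → ℝ := fun i => φ (Pi.single i 1) with hqdef
  have hrep : ∀ c : ι → ℝ, φ c = ∑ i, c i * q i := by
    intro c
    have hc : c = ∑ i, c i • (Pi.single (M := fun _ : ι => ℝ) i 1) := by
      funext j
      simp [Finset.sum_apply, Pi.single_apply]
    conv_lhs => rw [hc]
    rw [map_sum]
    simp [map_smul, smul_eq_mul]; rfl
  have hconstmem : ∀ t : ℝ, v < t → (fun _ : ι => t) ∈ O := by
    intro t ht i _; exact ht
  have hconstφ : ∀ t : ℝ, φ (fun _ : ι => t) = t * ∑ i, q i := by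
    intro t; rw [hrep]; rw [Finset.mul_sum]
  have hqnonpos : ∀ i, q i ≤ 0 := by
    intro i
    by_contra hqi
    push_neg at hqi
    set A := φ (fun _ : ι => v + 1) with hA
    have hAu : A < u := hO _ (hconstmem (v+1) (by linarith))
    set s : ℝ := max 0 ((u - A) / q i) + 1 with hs
    have hs0 : 0 ≤ s := by positivity
    have hsgt : (u - A) / q i < s := by
      have := le_max_right 0 ((u - A) / q i); linarith
    have hmem : ((fun _ : ι => v + 1) + s • (Pi.single (M := fun _ : ι => ℝ) i 1)) ∈ O := by
      intro j _
      simp only [Pi.add_apply, Pi.smul_apply, smul_eq_mul, Pi.single_apply]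
      have : (0:ℝ) ≤ s * (if j = i then 1 else 0) := by
        split <;> simp [hs0]
      show v < v + 1 + s * (if j = i then 1 else 0)
      linarith
    have hφm : φ ((fun _ : ι => v + 1) + s • (Pi.single (M := fun _ : ι => ℝ) i 1))
        = A + s * q i := by
      rw [map_add, map_smul, smul_eq_mul, hA]
    have hlt := hO _ hmem
    rw [hφm] at hlt
    have : u - A < s * q i := by
      have := (div_lt_iff₀ hqi).mp hsgt
      linarith
    linarith
  set Q : ℝ := ∑ i, q i with hQ
  have hQ0 : Q ≤ 0 := Finset.sum_nonpos fun i _ => hqnonpos i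
  have hc₀ : (fun i => G i ξ₀) ∈ C := ⟨ξ₀, hξ₀, fun i => le_refl _⟩
  have hQneg : Q < 0 := by
    rcases lt_or_eq_of_le hQ0 with h' | h'
    · exact h'
    · exfalso
      have hall : ∀ i ∈ Finset.univ, q i = 0 := by
        intro i _
        exact (Finset.sum_eq_zero_iff_of_nonpos
          (fun j (_ : j ∈ Finset.univ) => hqnonpos j)).mp
          (by rw [← hQ]; exact h') i (Finset.mem_univ i)
      have hzero : ∀ c : ι → ℝ, φ c = 0 := by
        intro c; rw [hrep]
        exact Finset.sum_eq_zero fun i hi => by rw [hall i hi, mul_zero]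
      have h1 : u ≤ 0 := by have := hC _ hc₀; rwa [hzero] at this
      have h2 : (0:ℝ) < u := by
        have := hO _ (hconstmem (v+1) (by linarith))
        rwa [hzero] at this
      linarith
  have huv : v * Q ≤ u := by
    by_contra huv
    push_neg at huv
    set δ : ℝ := (v * Q - u) / (-2 * Q) with hδ
    have hδ0 : 0 < δ := by
      apply div_pos (by linarith) (by linarith)
    have hQne : Q ≠ 0 := ne_of_lt hQneg
    have hδQ : δ * Q = -(v * Q - u) / 2 := by
      rw [hδ]; field_simp
    have := hO _ (hconstmem (v + δ) (by linarith))
    rw [hconstφ] at this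
    have hexp : (v + δ) * Q = v * Q + δ * Q := by ring
    rw [hexp, hδQ] at this
    linarith
  refine ⟨fun i => q i / Q, fun i => div_nonneg_of_nonpos (hqnonpos i) (le_of_lt hQneg),
    by rw [← Finset.sum_div, ← hQ, div_self (ne_of_lt hQneg)], fun ξ hξ => ?_⟩
  have hcmem : (fun i => G i ξ) ∈ C := ⟨ξ, hξ, fun i => le_refl _⟩
  have h1 : u ≤ ∑ i, G i ξ * q i := by
    have := hC _ hcmem; rwa [hrep] at this
  have hsum : ∑ i, q i / Q * G i ξ = (∑ i, G i ξ * q i) / Q := by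
    rw [Finset.sum_div]; congr 1; funext i; ring
  rw [hsum]
  rw [div_le_iff_of_neg hQneg]
  linarith

/-- Helly step: from a cover of `U` by sublevel sets of finitely many functions concave on `U`,
extract a subfamily of at most `nξ + 1` functions which still covers. -/
lemma helly_select {nξ : ℕ} {Ey : Type*} [DecidableEq Ey]
    (U : Set (EuclideanSpace ℝ (Fin nξ))) (Y' : Finset Ey) (hY'ne : Y'.Nonempty)
    (g : Ey → EuclideanSpace ℝ (Fin nξ) → ℝ)
    (hconc : ∀ y ∈ Y', ConcaveOn ℝ U (g y)) (v : ℝ)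
    (hcov : ∀ ξ ∈ U, ∃ y ∈ Y', g y ξ ≤ v) :
    ∃ T : Finset Ey, ↑T ⊆ ↑Y' ∧ T.Nonempty ∧ T.card ≤ nξ + 1 ∧
      ∀ ξ ∈ U, ∃ y ∈ T, g y ξ ≤ v := by
  classical
  by_cases hc : Y'.card ≤ nξ + 1
  · exact ⟨Y', by simp, hY'ne, hc, hcov⟩
  · set B : Ey → Set (EuclideanSpace ℝ (Fin nξ)) := fun y => {ξ ∈ U | v < g y ξ} with hB
    have hBconv : ∀ y ∈ Y', Convex ℝ (B y) := fun y hy => (hconc y hy).convex_gt v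
    have hempty : ¬ (⋂ y ∈ Y', B y).Nonempty := by
      rintro ⟨ξ, hξ⟩
      simp only [Set.mem_iInter] at hξ
      obtain ⟨y₁, hy₁⟩ := hY'ne
      have hξU : ξ ∈ U := (hξ y₁ hy₁).1
      obtain ⟨y₀, hy₀, h0⟩ := hcov ξ hξU
      exact absurd (hξ y₀ hy₀).2 (not_lt.mpr h0)
    have hmt := mt (Convex.helly_theorem' (𝕜 := ℝ) (F := B) (s := Y') hBconv) hempty
    push_neg at hmt
    obtain ⟨I, hIsub, hIcard, hIempty⟩ := hmt
    rw [finrank_euclideanSpace_fin] at hIcard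
    have hIne : I.Nonempty := by
      rcases I.eq_empty_or_nonempty with rfl | h
      · exfalso
        have h0 : (0 : EuclideanSpace ℝ (Fin nξ)) ∈ ⋂ y ∈ (∅ : Finset Ey), B y := by simp
        rw [hIempty] at h0
        exact h0
      · exact h
    refine ⟨I, by exact_mod_cast hIsub, hIne, hIcard, fun ξ hξ => ?_⟩
    have : ξ ∉ ⋂ y ∈ I, B y := by rw [hIempty]; exact Set.notMem_empty ξ
    simp only [Set.mem_iInter, not_forall] at this
    obtain ⟨y, hyI, hyB⟩ := this
    refine ⟨y, hyI, ?_⟩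
    by_contra hgt
    exact hyB ⟨hξ, not_le.mp hgt⟩

lemma finite_inf_le {β : Type*} {S : Set β} (hfin : S.Finite) (h : β → ℝ) {y : β}
    (hy : y ∈ S) : sInf (h '' S) ≤ h y :=
  csInf_le (hfin.image h).bddBelow ⟨y, hy, rfl⟩

lemma finite_inf_mem {β : Type*} {S : Set β} (hfin : S.Finite) (hne : S.Nonempty)
    (h : β → ℝ) : ∃ y ∈ S, sInf (h '' S) = h y := by
  have := (hne.image h).csInf_mem (hfin.image h)
  obtain ⟨y, hy, hyy⟩ := this
  exact ⟨y, hy, hyy.symm⟩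

/-- Worst-case value `sup_{ξ ∈ U} min_{y ∈ S} F(y, ξ)` (minimum written as `sInf` of the image,
which is the minimum for a finite nonempty `S`). -/
noncomputable def worstVal {Eξ Ey : Type*} (U : Set Eξ) (S : Set Ey) (F : Ey → Eξ → ℝ) : ℝ :=
  sSup ((fun ξ => sInf ((fun y => F y ξ) '' S)) '' U)

/-- The `k`-adaptability value for a fixed first stage:
`inf_{y¹,…,y^k ∈ S} sup_{ξ ∈ U} min_{i ∈ [k]} F(yⁱ, ξ)`. -/
noncomputable def kVal {Eξ Ey : Type*} (U : Set Eξ) (S : Set Ey) (F : Ey → Eξ → ℝ) (k : ℕ) : ℝ :=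
  sInf {v | ∃ y : Fin k → Ey, (∀ i, y i ∈ S) ∧ v = worstVal U (Set.range y) F}

section keylemma

variable {nξ ny : ℕ}

/-- The core bound, for a fixed first-stage decision. -/
lemma key_bound (U : Set (EuclideanSpace ℝ (Fin nξ)))
    (hUconv : Convex ℝ U) (hUne : U.Nonempty)
    (Y' : Set (EuclideanSpace ℝ (Fin ny))) (hY'fin : Y'.Finite) (hY'ne : Y'.Nonempty)
    (g : EuclideanSpace ℝ (Fin ny) → EuclideanSpace ℝ (Fin nξ) → ℝ)
    (hconc : ∀ y ∈ Y', ConcaveOn ℝ U (g y))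
    (M : ℝ) (hM : ∀ y ∈ Y', ∀ ξ ∈ U, |g y ξ| ≤ M)
    (LD : ℝ) (hLD : 0 < LD)
    (hlip : ∀ ξ ∈ U, ∀ y ∈ Y', ∀ y' ∈ Y', |g y ξ - g y' ξ| ≤ LD)
    (α : ℝ) (hα : 0 ≤ α) (k : ℕ) (hk1 : 1 ≤ k)
    (hfrac : 1 - (k : ℝ) / ((nξ : ℝ) + 1) ≤ α / LD) :
    kVal U Y' g k ≤ worstVal U Y' g + α := by
  classical
  set v := worstVal U Y' g with hv
  have hbddA : BddAbove ((fun ξ => sInf ((fun y => g y ξ) '' Y')) '' U) := by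
    refine ⟨M, ?_⟩
    rintro _ ⟨ξ, hξ, rfl⟩
    obtain ⟨y₀, hy₀⟩ := hY'ne
    exact le_trans (finite_inf_le hY'fin _ hy₀) (le_trans (le_abs_self _) (hM y₀ hy₀ ξ hξ))
  have hfactA : ∀ ξ ∈ U, sInf ((fun y => g y ξ) '' Y') ≤ v := fun ξ hξ =>
    le_csSup hbddA ⟨ξ, hξ, rfl⟩
  have hcov : ∀ ξ ∈ U, ∃ y ∈ hY'fin.toFinset, g y ξ ≤ v := by
    intro ξ hξ
    obtain ⟨y, hy, hyeq⟩ := finite_inf_mem hY'fin hY'ne (fun y => g y ξ)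
    exact ⟨y, hY'fin.mem_toFinset.mpr hy, hyeq ▸ hfactA ξ hξ⟩
  have hY'Fne : (hY'fin.toFinset).Nonempty := by
    obtain ⟨y₀, hy₀⟩ := hY'ne
    exact ⟨y₀, hY'fin.mem_toFinset.mpr hy₀⟩
  obtain ⟨T, hTsub, hTne, hTcard, hTcov⟩ := helly_select U hY'fin.toFinset hY'Fne g
    (fun y hy => hconc y (hY'fin.mem_toFinset.mp hy)) v hcov
  have hTY' : ∀ y ∈ T, y ∈ Y' := by
    intro y hy
    have : y ∈ hY'fin.toFinset := by exact_mod_cast hTsub hy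
    exact hY'fin.mem_toFinset.mp this
  haveI : Nonempty ↥T := ⟨⟨hTne.choose, hTne.choose_spec⟩⟩
  obtain ⟨w, hw0, hw1, hwle⟩ := exists_simplex_weights hUconv hUne
    (fun i : ↥T => g i.1) (fun i => hconc i.1 (hTY' i.1 i.2)) v
    (fun ξ hξ => by
      obtain ⟨y, hy, hle⟩ := hTcov ξ hξ
      exact ⟨⟨y, hy⟩, hle⟩)
  have hcardT : Fintype.card ↥T = T.card := Fintype.card_coe T
  obtain ⟨S, hScard, hSne, hmass⟩ :
      ∃ S : Finset ↥T, S.card ≤ k ∧ S.Nonempty ∧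
        1 - ∑ i ∈ S, w i ≤ α / LD := by
    by_cases hkT : T.card ≤ k
    · refine ⟨Finset.univ, by rw [Finset.card_univ, hcardT]; exact hkT,
        Finset.univ_nonempty, ?_⟩
      rw [hw1]
      simpa using div_nonneg hα hLD.le
    · push_neg at hkT
      have hcardeq : (Finset.univ : Finset ↥T).card = k + (T.card - k) := by
        rw [Finset.card_univ, hcardT]; omega
      obtain ⟨S, hSsub, hScard, hSmass⟩ := topk_mass (T.card - k) Finset.univ w
        (fun i _ => hw0 i) k hk1 hcardeq
      refine ⟨S, le_of_eq hScard, Finset.card_pos.mp (by omega), ?_⟩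
      rw [hw1, mul_one, Finset.card_univ, hcardT] at hSmass
      have hTpos : (0 : ℝ) < (T.card : ℝ) := by
        have := hTne.card_pos; exact_mod_cast this
      have hcle : (T.card : ℝ) ≤ (nξ : ℝ) + 1 := by exact_mod_cast hTcard
      have hS0 : 0 ≤ ∑ i ∈ S, w i := Finset.sum_nonneg fun i _ => hw0 i
      have h1 : (k : ℝ) / ((nξ : ℝ) + 1) ≤ ∑ i ∈ S, w i := by
        rw [div_le_iff₀ (by linarith)]
        calc (k:ℝ) ≤ (T.card : ℝ) * ∑ i ∈ S, w i := hSmass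
          _ ≤ ((nξ:ℝ)+1) * ∑ i ∈ S, w i := mul_le_mul_of_nonneg_right hcle hS0
          _ = (∑ i ∈ S, w i) * ((nξ:ℝ)+1) := by ring
      linarith
  set Sy : Finset (EuclideanSpace ℝ (Fin ny)) := S.image (fun i => i.1) with hSy
  have hSycard : Sy.card ≤ k := le_trans Finset.card_image_le hScard
  have hSyne : Sy.Nonempty := hSne.image _
  have hSyY' : ∀ y ∈ Sy, y ∈ Y' := by
    intro y hy
    obtain ⟨i, hi, rfl⟩ := Finset.mem_image.mp hy
    exact hTY' i.1 i.2
  have hkey : ∀ ξ ∈ U, sInf ((fun y => g y ξ) '' ↑Sy) ≤ v + α := by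
    intro ξ hξ
    have hfinSy : (↑Sy : Set (EuclideanSpace ℝ (Fin ny))).Finite := Sy.finite_toSet
    have hneSy : (↑Sy : Set (EuclideanSpace ℝ (Fin ny))).Nonempty := by
      obtain ⟨y, hy⟩ := hSyne; exact ⟨y, hy⟩
    obtain ⟨ym, hym, hmeq⟩ := finite_inf_mem hfinSy hneSy (fun y => g y ξ)
    set m := sInf ((fun y => g y ξ) '' ↑Sy) with hm
    have hmle : ∀ y ∈ Sy, m ≤ g y ξ := fun y hy => finite_inf_le hfinSy _ hy
    have hwsum := hwle ξ hξ
    have hsplit : ∑ i ∈ (Finset.univ \ S), w i * g i.1 ξ + ∑ i ∈ S, w i * g i.1 ξ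
        = ∑ i : ↥T, w i * g i.1 ξ := Finset.sum_sdiff (Finset.subset_univ S)
    have hmasssplit : ∑ i ∈ (Finset.univ \ S), w i + ∑ i ∈ S, w i = 1 := by
      rw [Finset.sum_sdiff (Finset.subset_univ S)]; exact hw1
    have hs1 : (∑ i ∈ S, w i) * m ≤ ∑ i ∈ S, w i * g i.1 ξ := by
      rw [Finset.sum_mul]
      refine Finset.sum_le_sum ?_
      intro i hi
      have := mul_le_mul_of_nonneg_left (hmle i.1 (Finset.mem_image_of_mem _ hi)) (hw0 i)
      linarith
    have hs2 : (∑ i ∈ (Finset.univ \ S), w i) * (m - LD) ≤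
        ∑ i ∈ (Finset.univ \ S), w i * g i.1 ξ := by
      rw [Finset.sum_mul]
      refine Finset.sum_le_sum ?_
      intro i _
      refine mul_le_mul_of_nonneg_left ?_ (hw0 i)
      have hlipi := hlip ξ hξ ym (hSyY' ym (by exact_mod_cast hym)) i.1 (hTY' i.1 i.2)
      have habs := abs_le.mp hlipi
      rw [hmeq]; linarith [habs.1]
    set A := ∑ i ∈ (Finset.univ \ S), w i with hA
    set B := ∑ i ∈ S, w i with hB
    have hALD : A * LD ≤ α := by
      have hAeq : A = 1 - B := by linarith
      rw [hAeq]
      calc (1 - B) * LD ≤ (α / LD) * LD := mul_le_mul_of_nonneg_right hmass hLD.le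
        _ = α := div_mul_cancel₀ α (ne_of_gt hLD)
    have hexp : A * (m - LD) + B * m = m - A * LD := by
      have h' : A + B = 1 := hmasssplit
      linear_combination m * h'
    nlinarith [hwsum, hsplit, hs1, hs2, hALD, hexp]
  have hUimgne : ((fun ξ => sInf ((fun y => g y ξ) '' ↑Sy)) '' U).Nonempty :=
    hUne.image _
  have hworst : worstVal U ↑Sy g ≤ v + α := by
    refine csSup_le hUimgne ?_
    rintro _ ⟨ξ, hξ, rfl⟩
    exact hkey ξ hξ
  obtain ⟨ytup, hrange⟩ := exists_tuple_range Sy k hSyne hSycard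
  have hytupY' : ∀ i, ytup i ∈ Y' := by
    intro i
    have : ytup i ∈ (↑Sy : Set (EuclideanSpace ℝ (Fin ny))) := hrange ▸ Set.mem_range_self i
    exact hSyY' _ (by exact_mod_cast this)
  have hmemk : worstVal U (Set.range ytup) g ∈
      {v' | ∃ y : Fin k → EuclideanSpace ℝ (Fin ny),
        (∀ i, y i ∈ Y') ∧ v' = worstVal U (Set.range y) g} :=
    ⟨ytup, hytupY', rfl⟩
  have hbddk : BddBelow {v' | ∃ y : Fin k → EuclideanSpace ℝ (Fin ny),
      (∀ i, y i ∈ Y') ∧ v' = worstVal U (Set.range y) g} := by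
    refine ⟨-M, ?_⟩
    rintro _ ⟨y', hy', rfl⟩
    have hk0 : 0 < k := hk1
    have i₀ : Fin k := ⟨0, hk0⟩
    obtain ⟨ξ₀, hξ₀⟩ := hUne
    have hfinr : (Set.range y').Finite := Set.finite_range y'
    have hner : (Set.range y').Nonempty := ⟨y' i₀, Set.mem_range_self i₀⟩
    obtain ⟨yj, hyj, hjeq⟩ := finite_inf_mem hfinr hner (fun y => g y ξ₀)
    obtain ⟨j, rfl⟩ := hyj
    have h1 : -M ≤ sInf ((fun y => g y ξ₀) '' Set.range y') := by
      rw [hjeq]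
      have := hM (y' j) (hy' j) ξ₀ hξ₀
      linarith [abs_le.mp this |>.1]
    have hbddr : BddAbove ((fun ξ => sInf ((fun y => g y ξ) '' Set.range y')) '' U) := by
      refine ⟨M, ?_⟩
      rintro _ ⟨ξ, hξ, rfl⟩
      refine le_trans (finite_inf_le hfinr _ (Set.mem_range_self i₀)) ?_
      linarith [abs_le.mp (hM (y' i₀) (hy' i₀) ξ hξ) |>.2]
    exact le_trans h1 (le_csSup hbddr ⟨ξ₀, hξ₀, rfl⟩)
  have hfin : kVal U Y' g k ≤ worstVal U (Set.range ytup) g := csInf_le hbddk hmemk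
  rw [hrange] at hfin
  exact le_trans hfin hworst

end keylemma

/-- Lower bound for the worst-case value of any tuple, given a uniform bound on `|g|`. -/
lemma worstVal_range_lb {Eξ Ey : Type*} (U : Set Eξ) (hUne : U.Nonempty) (Y' : Set Ey)
    (g : Ey → Eξ → ℝ) (M : ℝ) (hM : ∀ y ∈ Y', ∀ ξ ∈ U, |g y ξ| ≤ M) (k : ℕ) (hk : 0 < k)
    (y' : Fin k → Ey) (hy' : ∀ i, y' i ∈ Y') : -M ≤ worstVal U (Set.range y') g := by
  have i₀ : Fin k := ⟨0, hk⟩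
  obtain ⟨ξ₀, hξ₀⟩ := hUne
  have hfinr : (Set.range y').Finite := Set.finite_range y'
  have hner : (Set.range y').Nonempty := ⟨y' i₀, Set.mem_range_self i₀⟩
  obtain ⟨yj, hyj, hjeq⟩ := finite_inf_mem hfinr hner (fun y => g y ξ₀)
  obtain ⟨j, rfl⟩ := hyj
  have h1 : -M ≤ sInf ((fun y => g y ξ₀) '' Set.range y') := by
    rw [hjeq]
    linarith [abs_le.mp (hM (y' j) (hy' j) ξ₀ hξ₀) |>.1]
  have hbddr : BddAbove ((fun ξ => sInf ((fun y => g y ξ) '' Set.range y')) '' U) := by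
    refine ⟨M, ?_⟩
    rintro _ ⟨ξ, hξ, rfl⟩
    refine le_trans (finite_inf_le hfinr _ (Set.mem_range_self i₀)) ?_
    linarith [abs_le.mp (hM (y' i₀) (hy' i₀) ξ hξ) |>.2]
  exact le_trans h1 (le_csSup hbddr ⟨ξ₀, hξ₀, rfl⟩)

/-- If `f` is `L`-Lipschitz in `y`, `diam(Y) > 0`, `α ≥ 0` and
`k ≥ (n_ξ+1)·e^{−α/(L·diam(Y))}` is a positive integer, then
`opt(k) ≤ opt(2RO) + α`. -/
theorem stmt_4 (nx ny nξ : ℕ) (hnx : 0 < nx) (hny : 0 < ny) (hnξ : 0 < nξ)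
    (X : Set (EuclideanSpace ℝ (Fin nx))) (hXcomp : IsCompact X) (hXne : X.Nonempty)
    (Y : Set (EuclideanSpace ℝ (Fin ny))) (hYfin : Y.Finite) (hYne : Y.Nonempty)
    (hYint : ∀ y ∈ Y, ∀ i, ∃ z : ℤ, y i = (z : ℝ))
    (Yx : EuclideanSpace ℝ (Fin nx) → Set (EuclideanSpace ℝ (Fin ny)))
    (hYxsub : ∀ x ∈ X, Yx x ⊆ Y) (hYxne : ∀ x ∈ X, (Yx x).Nonempty)
    (U : Set (EuclideanSpace ℝ (Fin nξ))) (hUcomp : IsCompact U) (hUconv : Convex ℝ U)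
    (hUne : U.Nonempty)
    (f : EuclideanSpace ℝ (Fin nx) → EuclideanSpace ℝ (Fin ny) →
      EuclideanSpace ℝ (Fin nξ) → ℝ)
    (hfcont : Continuous fun p : EuclideanSpace ℝ (Fin nx) × EuclideanSpace ℝ (Fin ny) ×
      EuclideanSpace ℝ (Fin nξ) => f p.1 p.2.1 p.2.2)
    (hconc : ∀ x ∈ X, ∀ y ∈ Y, ConcaveOn ℝ U (f x y))
    (L : ℝ) (hL : 0 < L)
    (hlip : ∀ x ∈ X, ∀ ξ ∈ U, ∀ y ∈ Y, ∀ y' ∈ Y, |f x y ξ - f x y' ξ| ≤ L * ‖y - y'‖)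
    (hdiam : 0 < Metric.diam Y)
    (α : ℝ) (hα : 0 ≤ α)
    (k : ℕ) (hk1 : 1 ≤ k)
    (hk : ((nξ : ℝ) + 1) * Real.exp (-(α / (L * Metric.diam Y))) ≤ (k : ℝ)) :
    sInf ((fun x => kVal U (Yx x) (f x) k) '' X) ≤
      sInf ((fun x => worstVal U (Yx x) (f x)) '' X) + α := by
  classical
  -- global bound on |f|
  have hprodcomp : IsCompact (X ×ˢ (Y ×ˢ U)) :=
    hXcomp.prod ((hYfin.isCompact).prod hUcomp)
  obtain ⟨M, hM⟩ := hprodcomp.exists_bound_of_continuousOn hfcont.continuousOn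
  have hMf : ∀ x ∈ X, ∀ y ∈ Y, ∀ ξ ∈ U, |f x y ξ| ≤ M := by
    intro x hx y hy ξ hξ
    have := hM (x, y, ξ) ⟨hx, hy, hξ⟩
    simpa [Real.norm_eq_abs] using this
  set D := Metric.diam Y with hD
  have hLD : 0 < L * D := mul_pos hL hdiam
  -- the fractional inequality coming from the exponential condition
  have hfrac : 1 - (k : ℝ) / ((nξ : ℝ) + 1) ≤ α / (L * D) := by
    have hn1 : (0:ℝ) < (nξ:ℝ) + 1 := by positivity
    have hexp := Real.add_one_le_exp (-(α / (L * D)))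
    have h2 : ((nξ:ℝ)+1) * (1 - α / (L * D)) ≤ (k : ℝ) :=
      le_trans (mul_le_mul_of_nonneg_left (by linarith [hexp]) hn1.le) hk
    have h3 : 1 - α / (L * D) ≤ (k:ℝ)/((nξ:ℝ)+1) := by
      rw [le_div_iff₀ hn1]; linarith
    linarith
  -- pointwise (in x) bound
  have hkeyx : ∀ x ∈ X, kVal U (Yx x) (f x) k ≤ worstVal U (Yx x) (f x) + α := by
    intro x hx
    refine key_bound U hUconv hUne (Yx x) (hYfin.subset (hYxsub x hx)) (hYxne x hx)
      (f x) (fun y hy => hconc x hx y (hYxsub x hx hy)) M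
      (fun y hy ξ hξ => hMf x hx y (hYxsub x hx hy) ξ hξ) (L * D) hLD
      ?_ α hα k hk1 hfrac
    intro ξ hξ y hy y' hy'
    have h1 := hlip x hx ξ hξ y (hYxsub x hx hy) y' (hYxsub x hx hy')
    have h2 : ‖y - y'‖ ≤ D := by
      rw [← dist_eq_norm]
      exact Metric.dist_le_diam_of_mem hYfin.isBounded (hYxsub x hx hy) (hYxsub x hx hy')
    exact le_trans h1 (mul_le_mul_of_nonneg_left h2 hL.le)
  -- lower bound for kVal, uniformly over X
  have hKlb : ∀ x ∈ X, -M ≤ kVal U (Yx x) (f x) k := by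
    intro x hx
    apply le_csInf
    · obtain ⟨y₀, hy₀⟩ := hYxne x hx
      exact ⟨_, fun _ : Fin k => y₀, fun _ => hy₀, rfl⟩
    · rintro b ⟨y', hy', rfl⟩
      exact worstVal_range_lb U hUne (Yx x) (f x) M
        (fun y hy ξ hξ => hMf x hx y (hYxsub x hx hy) ξ hξ) k hk1 y' hy'
  have hWne : ((fun x => worstVal U (Yx x) (f x)) '' X).Nonempty := hXne.image _
  have hKbdd : BddBelow ((fun x => kVal U (Yx x) (f x) k) '' X) := by
    refine ⟨-M, ?_⟩
    rintro _ ⟨x, hx, rfl⟩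
    exact hKlb x hx
  have hstep : ∀ b ∈ ((fun x => worstVal U (Yx x) (f x)) '' X),
      sInf ((fun x => kVal U (Yx x) (f x) k) '' X) ≤ b + α := by
    rintro _ ⟨x, hx, rfl⟩
    exact le_trans (csInf_le hKbdd ⟨x, hx, rfl⟩) (hkeyx x hx)
  have hlb : sInf ((fun x => kVal U (Yx x) (f x) k) '' X) - α ≤
      sInf ((fun x => worstVal U (Yx x) (f x)) '' X) := by
    refine le_csInf hWne ?_
    intro b hb
    linarith [hstep b hb]
  linarith
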